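/- Let p be a probability vector on {1,…,d}, let Ψ_1,…,Ψ_d be orthonormal vectors in ℂ^m, and let σ = ∑_{i=1}^d p_i · E_ii ⊗ |Ψ_i⟩⟨Ψ_i| be the corresponding density matrix on ℂ^d ⊗ ℂ^m. Let (B_l)_{l∈L} be any projective measurement on ℂ^d and (Y_n)_{n∈N} any projective measurement on ℂ^m. Define the joint outcome distributions p_{BX}(l,i) = Re Tr((B_l ⊗ |Ψ_i⟩⟨Ψ_i|) σ) for i ∈ {1,…,d} and p_{BY}(l,n) = Re Tr((B_l ⊗ Y_n) σ). Then both are probability mass functions and I(B:X) ≥ I(B:Y): the pointer measurement X on the fragment is the optimal measurement for learning about any system observable B. -/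

import Mathlib

open Matrix Kronecker BigOperators

noncomputable section

/-- Standard Hermitian inner product on `Fin m → ℂ` (conjugate-linear in the first slot). -/
def cinner {m : ℕ} (u v : Fin m → ℂ) : ℂ :=
  ∑ k, (starRingEnd ℂ) (u k) * v k

/-- The matrix unit `E_ii`. -/
def matE {d : ℕ} (i : Fin d) : Matrix (Fin d) (Fin d) ℂ :=
  Matrix.single i i 1

/-- The rank-one projector `|v⟩⟨v|`. -/
def projVec {m : ℕ} (v : Fin m → ℂ) : Matrix (Fin m) (Fin m) ℂ :=
  Matrix.of fun k l => v k * (starRingEnd ℂ) (v l)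

/-- The perfectly correlated system–fragment state `σ = ∑ᵢ pᵢ E_ii ⊗ |Ψᵢ⟩⟨Ψᵢ|`. -/
def sigmaSF {d m : ℕ} (p : Fin d → ℝ) (Ψ : Fin d → Fin m → ℂ) :
    Matrix (Fin d × Fin m) (Fin d × Fin m) ℂ :=
  ∑ i, (p i : ℂ) • (matE i ⊗ₖ projVec (Ψ i))

/-- A projective measurement: a finite family of Hermitian, mutually orthogonal
idempotents summing to the identity. -/
def IsProjMeasurement {ι n : Type*} [Fintype ι] [DecidableEq ι] [Fintype n] [DecidableEq n]
    (P : ι → Matrix n n ℂ) : Prop :=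
  (∀ k, (P k).IsHermitian) ∧
  (∀ k l, P k * P l = if k = l then P k else 0) ∧
  (∑ k, P k = 1)

/-- Mutual information of a joint pmf `p` on `I × J`. -/
def mutualInfo {I J : Type*} [Fintype I] [Fintype J] (p : I → J → ℝ) : ℝ :=
  ∑ i, ∑ j, if p i j = 0 then 0
    else p i j * Real.log (p i j / ((∑ j', p i j') * (∑ i', p i' j)))

section helpers

lemma logSum {ι : Type*} [Fintype ι] (a b : ι → ℝ) (ha : ∀ i, 0 ≤ a i) (hb : ∀ i, 0 ≤ b i)
    (hz : ∀ i, b i = 0 → a i = 0) :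
    (if (∑ i, a i) = 0 then 0 else (∑ i, a i) * Real.log ((∑ i, a i) / (∑ i, b i))) ≤
    ∑ i, if a i = 0 then 0 else a i * Real.log (a i / b i) := by
  by_cases hA : (∑ i, a i) = 0
  · have h0 : ∀ i, a i = 0 := fun i =>
      (Finset.sum_eq_zero_iff_of_nonneg (fun i _ => ha i)).1 hA i (Finset.mem_univ i)
    simp [hA, h0]
  · rw [if_neg hA]
    set A := ∑ i, a i with hAdef
    set Bs := ∑ i, b i with hBdef
    have hApos : 0 < A := lt_of_le_of_ne (Finset.sum_nonneg fun i _ => ha i) (Ne.symm hA)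
    have hBpos : 0 < Bs := by
      rcases (Finset.sum_nonneg fun (i : ι) (_ : i ∈ Finset.univ) => hb i).lt_or_eq with h | h
      · exact h
      · exfalso; apply hA
        have hb0 : ∀ i, b i = 0 := fun i =>
          (Finset.sum_eq_zero_iff_of_nonneg (fun i _ => hb i)).1 h.symm i (Finset.mem_univ i)
        exact Finset.sum_eq_zero fun i _ => hz i (hb0 i)
    have key : ∀ i, a i * Real.log (A / Bs) + a i - b i * (A / Bs) ≤
        (if a i = 0 then 0 else a i * Real.log (a i / b i)) := by
      intro i
      by_cases hai : a i = 0
      · rw [if_pos hai, hai]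
        have : 0 ≤ b i * (A / Bs) := mul_nonneg (hb i) (by positivity)
        linarith
      · rw [if_neg hai]
        have hai' : 0 < a i := lt_of_le_of_ne (ha i) (Ne.symm hai)
        have hbi : 0 < b i := by
          rcases (hb i).lt_or_eq with h | h
          · exact h
          · exact absurd (hz i h.symm) hai
        have hx : 0 < b i * A / (a i * Bs) := by positivity
        have hlog := Real.log_le_sub_one_of_pos hx
        have hsplit : Real.log (b i * A / (a i * Bs)) =
            Real.log (A / Bs) - Real.log (a i / b i) := by
          rw [Real.log_div (by positivity) (by positivity),
              Real.log_mul hbi.ne' hApos.ne', Real.log_mul hai hBpos.ne',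
              Real.log_div hApos.ne' hBpos.ne', Real.log_div hai hbi.ne']
          ring
        rw [hsplit] at hlog
        have hmul := mul_le_mul_of_nonneg_left hlog (le_of_lt hai')
        have heq : a i * (b i * A / (a i * Bs) - 1) = b i * (A / Bs) - a i := by
          field_simp
        nlinarith [hmul, heq]
    calc A * Real.log (A / Bs)
        = ∑ i, (a i * Real.log (A / Bs) + a i - b i * (A / Bs)) := by
          rw [Finset.sum_sub_distrib, Finset.sum_add_distrib, ← Finset.sum_mul,
            ← Finset.sum_mul, ← hAdef, ← hBdef]
          field_simp
          ring
      _ ≤ ∑ i, if a i = 0 then 0 else a i * Real.log (a i / b i) :=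
          Finset.sum_le_sum fun i _ => key i

lemma trace_mul_matE {d : ℕ} (A : Matrix (Fin d) (Fin d) ℂ) (i : Fin d) :
    (A * matE i).trace = A i i := by
  simp [matE, Matrix.trace, Matrix.diag, Matrix.mul_apply, Matrix.single,
    Finset.sum_ite_eq, ite_and]

lemma trace_mul_projVec {m : ℕ} (C : Matrix (Fin m) (Fin m) ℂ) (v : Fin m → ℂ) :
    (C * projVec v).trace = ∑ k, ∑ j, C k j * v j * (starRingEnd ℂ) (v k) := by
  simp [projVec, Matrix.trace, Matrix.diag, Matrix.mul_apply, mul_assoc]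

lemma trace_proj_proj {m : ℕ} (u v : Fin m → ℂ) :
    (projVec u * projVec v).trace = cinner u v * cinner v u := by
  rw [trace_mul_projVec]
  simp only [projVec, Matrix.of_apply, cinner]
  rw [Finset.sum_mul_sum, Finset.sum_comm]
  apply Finset.sum_congr rfl; intro j _
  apply Finset.sum_congr rfl; intro k _
  ring

lemma trace_kron_sigma {d m : ℕ} (p : Fin d → ℝ) (Ψ : Fin d → Fin m → ℂ)
    (A : Matrix (Fin d) (Fin d) ℂ) (C : Matrix (Fin m) (Fin m) ℂ) :
    ((A ⊗ₖ C) * sigmaSF p Ψ).trace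
      = ∑ i, (p i : ℂ) * (A i i * (C * projVec (Ψ i)).trace) := by
  rw [sigmaSF, Finset.mul_sum, Matrix.trace_sum]
  apply Finset.sum_congr rfl; intro i _
  rw [Matrix.mul_smul, Matrix.trace_smul, ← Matrix.mul_kronecker_mul,
    Matrix.trace_kronecker, trace_mul_matE]
  simp [smul_eq_mul]

lemma herm_diag {d : ℕ} (P : Matrix (Fin d) (Fin d) ℂ) (hH : P.IsHermitian) (hPP : P * P = P)
    (i : Fin d) : P i i = ((∑ k, Complex.normSq (P i k) : ℝ) : ℂ) := by
  have hP' : ∀ a b, (starRingEnd ℂ) (P a b) = P b a := fun a b => by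
    conv_rhs => rw [← hH]
    simp [Matrix.conjTranspose_apply]
  conv_lhs => rw [← hPP]
  rw [Matrix.mul_apply]
  push_cast
  apply Finset.sum_congr rfl; intro k _
  rw [← hP' i k, Complex.mul_conj]

lemma herm_quad {m : ℕ} (Y : Matrix (Fin m) (Fin m) ℂ) (hH : Y.IsHermitian) (hYY : Y * Y = Y)
    (v : Fin m → ℂ) :
    (Y * projVec v).trace = ((∑ k, Complex.normSq ((Y *ᵥ v) k) : ℝ) : ℂ) := by
  have hY' : ∀ a b, (starRingEnd ℂ) (Y a b) = Y b a := fun a b => by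
    conv_rhs => rw [← hH]
    simp [Matrix.conjTranspose_apply]
  have hw : Y *ᵥ (Y *ᵥ v) = Y *ᵥ v := by rw [Matrix.mulVec_mulVec, hYY]
  have e1 : (Y * projVec v).trace = ∑ k, (Y *ᵥ v) k * (starRingEnd ℂ) (v k) := by
    rw [trace_mul_projVec]
    apply Finset.sum_congr rfl; intro k _
    rw [show (Y *ᵥ v) k = ∑ j, Y k j * v j from rfl, Finset.sum_mul]
  have e2 : ∀ u : Fin m → ℂ, ∑ k, (Y *ᵥ u) k * (starRingEnd ℂ) (v k)
      = ∑ k, u k * (starRingEnd ℂ) ((Y *ᵥ v) k) := by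
    intro u
    simp only [Matrix.mulVec, dotProduct, map_sum, _root_.map_mul, hY', Finset.sum_mul,
      Finset.mul_sum]
    rw [Finset.sum_comm]
    apply Finset.sum_congr rfl; intro k _
    apply Finset.sum_congr rfl; intro j _
    ring
  rw [e1, ← hw, e2, hw]
  push_cast
  apply Finset.sum_congr rfl; intro k _
  exact Complex.mul_conj _

end helpers

/-- Eq. (34) (measurement optimality): the pointer measurement `X` on the fragment is
optimal for learning about any system observable `B`: `I(B:Y) ≤ I(B:X)` for every
fragment measurement `Y`, and the joint distributions are genuine pmfs. -/
theorem stmt_15 {d m : ℕ} {L N : Type*}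
    [Fintype L] [DecidableEq L] [Fintype N] [DecidableEq N]
    (p : Fin d → ℝ) (hp0 : ∀ i, 0 ≤ p i) (hp1 : ∑ i, p i = 1)
    (Ψ : Fin d → Fin m → ℂ)
    (hΨ : ∀ i j, cinner (Ψ i) (Ψ j) = if i = j then 1 else 0)
    (B : L → Matrix (Fin d) (Fin d) ℂ) (hB : IsProjMeasurement B)
    (Y : N → Matrix (Fin m) (Fin m) ℂ) (hY : IsProjMeasurement Y)
    (pBX : L → Fin d → ℝ)
    (hBX : ∀ l i, pBX l i = (((B l ⊗ₖ projVec (Ψ i)) * sigmaSF p Ψ).trace).re)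
    (pBY : L → N → ℝ)
    (hBY : ∀ l n, pBY l n = (((B l ⊗ₖ Y n) * sigmaSF p Ψ).trace).re) :
    (∀ l i, 0 ≤ pBX l i) ∧ (∑ l, ∑ i, pBX l i = 1) ∧
    (∀ l n, 0 ≤ pBY l n) ∧ (∑ l, ∑ n, pBY l n = 1) ∧
    mutualInfo pBY ≤ mutualInfo pBX := by
  obtain ⟨hBH, hBO, hB1⟩ := hB
  obtain ⟨hYH, hYO, hY1⟩ := hY
  have hBproj : ∀ l, B l * B l = B l := fun l => by simpa using hBO l l
  have hYproj : ∀ n, Y n * Y n = Y n := fun n => by simpa using hYO n n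
  -- real diagonal of B and expectation of Y
  set b : L → Fin d → ℝ := fun l i => ((B l) i i).re with hbdef
  set q : Fin d → N → ℝ := fun i n => ((Y n * projVec (Ψ i)).trace).re with hqdef
  have hBdiag : ∀ l i, (B l) i i = ((b l i : ℝ) : ℂ) := by
    intro l i
    show (B l) i i = (((B l i i).re : ℝ) : ℂ)
    rw [herm_diag (B l) (hBH l) (hBproj l) i]
    simp
  have hb0 : ∀ l i, 0 ≤ b l i := by
    intro l i
    show 0 ≤ (B l i i).re
    rw [herm_diag (B l) (hBH l) (hBproj l) i]
    simp only [Complex.ofReal_re]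
    exact Finset.sum_nonneg fun k _ => Complex.normSq_nonneg _
  have hYtr : ∀ i n, (Y n * projVec (Ψ i)).trace = ((q i n : ℝ) : ℂ) := by
    intro i n
    show _ = ((((Y n * projVec (Ψ i)).trace).re : ℝ) : ℂ)
    rw [herm_quad (Y n) (hYH n) (hYproj n) (Ψ i)]
    simp
  have hq0 : ∀ i n, 0 ≤ q i n := by
    intro i n
    show 0 ≤ ((Y n * projVec (Ψ i)).trace).re
    rw [herm_quad (Y n) (hYH n) (hYproj n) (Ψ i)]
    simp only [Complex.ofReal_re]
    exact Finset.sum_nonneg fun k _ => Complex.normSq_nonneg _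
  -- joint pmf formulas
  have hbx : ∀ l i, pBX l i = p i * b l i := by
    intro l i
    rw [hBX l i, trace_kron_sigma]
    have hterm : ∀ j, (p j : ℂ) * (B l j j * ((projVec (Ψ i) * projVec (Ψ j)).trace))
        = if j = i then (p i : ℂ) * ((b l i : ℝ) : ℂ) else 0 := by
      intro j
      rw [trace_proj_proj, hΨ, hΨ]
      by_cases h : i = j
      · subst h; rw [if_pos rfl, if_pos rfl, hBdiag]; ring
      · rw [if_neg h, if_neg (Ne.symm h), if_neg (Ne.symm h)]; ring
    rw [Finset.sum_congr rfl fun j _ => hterm j, Finset.sum_ite_eq' Finset.univ i]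
    simp [← Complex.ofReal_mul]
  have hby : ∀ l n, pBY l n = ∑ i, p i * b l i * q i n := by
    intro l n
    rw [hBY l n, trace_kron_sigma, Complex.re_sum]
    apply Finset.sum_congr rfl; intro i _
    rw [hYtr, hBdiag, ← Complex.ofReal_mul, ← Complex.ofReal_mul, Complex.ofReal_re]
    ring
  -- marginal identities
  have hsumb : ∀ i, ∑ l, b l i = 1 := by
    intro i
    have : ∑ l, (B l) i i = 1 := by
      have := congrFun (congrFun hB1 i) i
      simpa [Matrix.sum_apply, Matrix.one_apply_eq] using this
    have h2 : ∑ l, ((b l i : ℝ) : ℂ) = 1 := by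
      rw [← this]; exact Finset.sum_congr rfl fun l _ => (hBdiag l i).symm
    have := congrArg Complex.re h2
    simpa [Complex.re_sum] using this
  have hsumq : ∀ i, ∑ n, q i n = 1 := by
    intro i
    have h1 : ∑ n, (Y n * projVec (Ψ i)).trace = 1 := by
      rw [← Matrix.trace_sum]
      rw [show ∑ n, Y n * projVec (Ψ i) = (∑ n, Y n) * projVec (Ψ i) from
        (Finset.sum_mul _ _ _).symm, hY1, one_mul]
      have := hΨ i i
      rw [if_pos rfl] at this
      rw [← this, cinner]
      simp [projVec, Matrix.trace, Matrix.diag, mul_comm]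
    have h2 : ∑ n, ((q i n : ℝ) : ℂ) = 1 := by
      rw [← h1]; exact Finset.sum_congr rfl fun n _ => (hYtr i n).symm
    have := congrArg Complex.re h2
    simpa [Complex.re_sum] using this
  -- pmf facts
  have g1 : ∀ l i, 0 ≤ pBX l i := fun l i => by
    rw [hbx]; exact mul_nonneg (hp0 i) (hb0 l i)
  have hP2X : ∀ i, ∑ l, pBX l i = p i := by
    intro i
    calc ∑ l, pBX l i = ∑ l, p i * b l i := Finset.sum_congr rfl fun l _ => hbx l i
      _ = p i * ∑ l, b l i := (Finset.mul_sum _ _ _).symm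
      _ = p i := by rw [hsumb, mul_one]
  have g2 : ∑ l, ∑ i, pBX l i = 1 := by
    rw [Finset.sum_comm]
    rw [Finset.sum_congr rfl fun i _ => hP2X i]
    exact hp1
  have hby' : ∀ l n, pBY l n = ∑ i, pBX l i * q i n := by
    intro l n
    rw [hby]
    exact Finset.sum_congr rfl fun i _ => by rw [hbx]
  have g3 : ∀ l n, 0 ≤ pBY l n := fun l n => by
    rw [hby']
    exact Finset.sum_nonneg fun i _ => mul_nonneg (g1 l i) (hq0 i n)
  have hP1Y : ∀ l, ∑ n, pBY l n = ∑ i, pBX l i := by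
    intro l
    rw [Finset.sum_congr rfl fun (n : N) _ => hby' l n, Finset.sum_comm]
    apply Finset.sum_congr rfl; intro i _
    rw [← Finset.mul_sum, hsumq, mul_one]
  have hP2Y : ∀ n, ∑ l, pBY l n = ∑ i, p i * q i n := by
    intro n
    rw [Finset.sum_congr rfl fun (l : L) _ => hby' l n, Finset.sum_comm]
    apply Finset.sum_congr rfl; intro i _
    calc ∑ l, pBX l i * q i n = (∑ l, pBX l i) * q i n := (Finset.sum_mul _ _ _).symm
      _ = p i * q i n := by rw [hP2X]
  have g4 : ∑ l, ∑ n, pBY l n = 1 := by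
    rw [Finset.sum_congr rfl fun (l : L) _ => hP1Y l]
    exact g2
  refine ⟨g1, g2, g3, g4, ?_⟩
  -- the data-processing inequality
  have hMY : mutualInfo pBY = ∑ l, ∑ n, (if pBY l n = 0 then 0 else
      pBY l n * Real.log (pBY l n / ((∑ i', pBX l i') * (∑ i, p i * q i n)))) := by
    rw [mutualInfo]
    apply Finset.sum_congr rfl; intro l _
    apply Finset.sum_congr rfl; intro n _
    rw [hP1Y l, hP2Y n]
  have hMX : mutualInfo pBX = ∑ l, ∑ i, (if pBX l i = 0 then 0 else
      pBX l i * Real.log (pBX l i / ((∑ i', pBX l i') * p i))) := by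
    rw [mutualInfo]
    apply Finset.sum_congr rfl; intro l _
    apply Finset.sum_congr rfl; intro i _
    rw [hP2X i]
  rw [hMY, hMX]
  have key : ∀ l n, (if pBY l n = 0 then 0 else
      pBY l n * Real.log (pBY l n / ((∑ i', pBX l i') * (∑ i, p i * q i n)))) ≤
      ∑ i, (if pBX l i * q i n = 0 then 0 else
        pBX l i * q i n * Real.log (pBX l i / ((∑ i', pBX l i') * p i))) := by
    intro l n
    have hls := logSum (fun i => pBX l i * q i n)
      (fun i => (∑ i', pBX l i') * p i * q i n)
      (fun i => mul_nonneg (g1 l i) (hq0 i n))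
      (fun i => mul_nonneg (mul_nonneg (Finset.sum_nonneg fun i' _ => g1 l i') (hp0 i))
        (hq0 i n))
      (by
        intro i h
        change (∑ i', pBX l i') * p i * q i n = 0 at h
        show pBX l i * q i n = 0
        rcases mul_eq_zero.1 h with h1 | h1
        · rcases mul_eq_zero.1 h1 with h2 | h2
          · have : pBX l i = 0 :=
              (Finset.sum_eq_zero_iff_of_nonneg fun i' _ => g1 l i').1 h2 i (Finset.mem_univ i)
            rw [this, zero_mul]
          · rw [hbx, h2, zero_mul, zero_mul]
        · rw [h1, mul_zero])
    have hsa : ∑ i, pBX l i * q i n = pBY l n := (hby' l n).symm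
    have hsb : ∑ i, (∑ i', pBX l i') * p i * q i n
        = (∑ i', pBX l i') * (∑ i, p i * q i n) := by
      rw [Finset.mul_sum]
      exact Finset.sum_congr rfl fun i _ => by ring
    rw [hsa, hsb] at hls
    refine le_trans hls (le_of_eq (Finset.sum_congr rfl fun i _ => ?_))
    by_cases h : pBX l i * q i n = 0
    · rw [if_pos h, if_pos h]
    · rw [if_neg h, if_neg h]
      have hqn : q i n ≠ 0 := fun hc => h (by rw [hc, mul_zero])
      rw [mul_div_mul_right _ _ hqn]
  calc ∑ l, ∑ n, (if pBY l n = 0 then 0 else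
        pBY l n * Real.log (pBY l n / ((∑ i', pBX l i') * (∑ i, p i * q i n))))
      ≤ ∑ l, ∑ n, ∑ i, (if pBX l i * q i n = 0 then 0 else
        pBX l i * q i n * Real.log (pBX l i / ((∑ i', pBX l i') * p i))) :=
        Finset.sum_le_sum fun l _ => Finset.sum_le_sum fun n _ => key l n
    _ = ∑ l, ∑ i, (if pBX l i = 0 then 0 else
        pBX l i * Real.log (pBX l i / ((∑ i', pBX l i') * p i))) := by
        apply Finset.sum_congr rfl; intro l _
        rw [Finset.sum_comm]
        apply Finset.sum_congr rfl; intro i _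
        by_cases hx : pBX l i = 0
        · rw [if_pos hx]
          apply Finset.sum_eq_zero; intro n _
          rw [hx, zero_mul, if_pos rfl]
        · rw [if_neg hx]
          calc ∑ n, (if pBX l i * q i n = 0 then 0 else
                pBX l i * q i n * Real.log (pBX l i / ((∑ i', pBX l i') * p i)))
              = ∑ n, q i n * (pBX l i * Real.log (pBX l i / ((∑ i', pBX l i') * p i))) := by
                apply Finset.sum_congr rfl; intro n _
                by_cases hq : q i n = 0
                · rw [hq, mul_zero, if_pos rfl, zero_mul]
                · rw [if_neg (mul_ne_zero hx hq)]; ring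
            _ = (∑ n, q i n) * (pBX l i * Real.log (pBX l i / ((∑ i', pBX l i') * p i))) :=
                (Finset.sum_mul _ _ _).symm
            _ = pBX l i * Real.log (pBX l i / ((∑ i', pBX l i') * p i)) := by
                rw [hsumq, one_mul]
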